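/- arXiv:2401.04951 — 3 statements merged into one kernel-verified Lean document; each statement's English description precedes it below -/
import Mathlib

section
/- Let T ∈ G be an operator that is not unitary with respect to the standard inner product of H ⊕ ℂ. Then T is a normal operator if and only if there exist x₀ ∈ H and λ₁, λ₂ ∈ ℂ such that T(x₀,1) = λ₁·(x₀,1) and T(−x₀,1) = λ₂·(−x₀,1); moreover, in this case ‖x₀‖ = 1. -/
noncomputable section

variable {H : Type*} [NormedAddCommGroup H] [InnerProductSpace ℂ H] [CompleteSpace H]

/-- The Hermitian form `A((x,z),(y,w)) = ⟨x,y⟩ - z·conj w` on `H ⊕ ℂ`, linear in the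
first argument (the paper's convention); `⟨x,y⟩` (linear in `x`) is `inner y x` in Mathlib. -/
def formA (u v : H × ℂ) : ℂ :=
  (inner ℂ v.1 u.1 : ℂ) - u.2 * (starRingEnd ℂ) v.2

/-- The standard inner product of the Hilbert space `H ⊕ ℂ`, linear in the first argument. -/
def ipStd (u v : H × ℂ) : ℂ :=
  (inner ℂ v.1 u.1 : ℂ) + u.2 * (starRingEnd ℂ) v.2

/-- Membership in the group `G` of bounded bijective linear maps preserving `A`. -/
def memG (T : (H × ℂ) →L[ℂ] (H × ℂ)) : Prop :=
  Function.Bijective T ∧ ∀ u v : H × ℂ, formA (T u) (T v) = formA u v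

/-- `T` is elliptic: it has an eigenvector `(x,1)` with `‖x‖ < 1`. -/
def IsEllipticG (T : (H × ℂ) →L[ℂ] (H × ℂ)) : Prop :=
  ∃ x : H, ‖x‖ < 1 ∧ ∃ μ : ℂ, T (x, 1) = μ • ((x, 1) : H × ℂ)

/-- Points `x` of the closed unit ball with `(x,1)` an eigenvector of `T`. -/
def fixedBall (T : (H × ℂ) →L[ℂ] (H × ℂ)) : Set H :=
  {x : H | ‖x‖ ≤ 1 ∧ ∃ μ : ℂ, T (x, 1) = μ • ((x, 1) : H × ℂ)}

/-- `T` is hyperbolic: not elliptic, with exactly two fixed points in the closed ball. -/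
def IsHyperbolicG (T : (H × ℂ) →L[ℂ] (H × ℂ)) : Prop :=
  ¬ IsEllipticG T ∧ ∃ x y : H, x ≠ y ∧ fixedBall T = {x, y}

/-- `T` is parabolic: not elliptic, with exactly one fixed point in the closed ball. -/
def IsParabolicG (T : (H × ℂ) →L[ℂ] (H × ℂ)) : Prop :=
  ¬ IsEllipticG T ∧ ∃ x : H, fixedBall T = {x}

/-- `M†`, the `A`-orthogonal complement of a subspace `M` of `H ⊕ ℂ`. -/
def daggerA (M : Submodule ℂ (H × ℂ)) : Submodule ℂ (H × ℂ) where
  carrier := {v | ∀ m ∈ M, formA v m = 0}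
  add_mem' := by
    intro a b ha hb m hm
    have h1 := ha m hm
    have h2 := hb m hm
    simp only [formA, Prod.fst_add, Prod.snd_add, inner_add_right, add_mul] at *
    linear_combination h1 + h2
  zero_mem' := by
    intro m hm
    simp [formA]
  smul_mem' := by
    intro c a ha m hm
    have h1 := ha m hm
    simp only [formA, Prod.smul_fst, Prod.smul_snd, inner_smul_right, smul_eq_mul] at *
    linear_combination c * h1

/-- The norm induced by `A` on a subspace where `A` is positive. -/
def nA (v : H × ℂ) : ℝ := Real.sqrt (formA v v).re

/-- Sequential completeness of a subspace for the norm induced by `A`. -/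
def CompleteForA (M : Submodule ℂ (H × ℂ)) : Prop :=
  ∀ f : ℕ → H × ℂ, (∀ n, f n ∈ M) →
    (∀ ε : ℝ, 0 < ε → ∃ N : ℕ, ∀ m n : ℕ, N ≤ m → N ≤ n → nA (f m - f n) < ε) →
    ∃ v ∈ M, ∀ ε : ℝ, 0 < ε → ∃ N : ℕ, ∀ n : ℕ, N ≤ n → nA (f n - v) < ε

end

section
variable {H : Type*} [NormedAddCommGroup H] [InnerProductSpace ℂ H] [CompleteSpace H]

set_option linter.unusedSectionVars false
open scoped ComplexConjugate

local notation "⟪" x ", " y "⟫" => @inner ℂ _ _ x y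

private lemma prod_decomp (x : H) (z : ℂ) : ((x, z) : H × ℂ) = (x, 0) + z • ((0:H), (1:ℂ)) := by
  simp [Prod.ext_iff]

private lemma T_apply (T : (H × ℂ) →L[ℂ] (H × ℂ)) (x : H) (z : ℂ) :
    T (x, z) = T (x, 0) + z • T (0, 1) := by
  conv_lhs => rw [prod_decomp, map_add, map_smul]

private lemma T_comp (T : (H × ℂ) →L[ℂ] (H × ℂ)) (x : H) (z : ℂ) :
    T (x, z) = ((T (x, 0)).1 + z • (T (0, 1)).1, (T (x, 0)).2 + z * (T (0, 1)).2) := by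
  rw [T_apply]
  apply Prod.ext <;> simp

private lemma T_smul (T : (H × ℂ) →L[ℂ] (H × ℂ)) (s : ℂ) (x : H) :
    T (s • x, 0) = s • T (x, 0) := by
  rw [show ((s • x, (0:ℂ)) : H × ℂ) = s • (x, 0) by simp [Prod.ext_iff], map_smul]

private lemma T_add (T : (H × ℂ) →L[ℂ] (H × ℂ)) (x y : H) :
    T (x + y, 0) = T (x, 0) + T (y, 0) := by
  rw [show ((x + y, (0:ℂ)) : H × ℂ) = (x,0) + (y,0) by simp [Prod.ext_iff], map_add]

private lemma formA_smul (s t : ℂ) (u w : H × ℂ) :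
    formA (s • u) (t • w) = s * conj t * formA u w := by
  simp only [formA, Prod.smul_fst, Prod.smul_snd, inner_smul_left, inner_smul_right,
    smul_eq_mul, map_mul]
  ring

private lemma formA_smul_right (t : ℂ) (u w : H × ℂ) :
    formA u (t • w) = conj t * formA u w := by
  simp only [formA, Prod.smul_fst, Prod.smul_snd, inner_smul_left,
    smul_eq_mul, map_mul]
  ring

-- unitarity criterion
private lemma unitary_of (T : (H × ℂ) →L[ℂ] (H × ℂ))
    (hG : ∀ u v : H × ℂ, formA (T u) (T v) = formA u v)
    (hb : (T ((0:H), (1:ℂ))).1 = 0) (hc : ∀ x : H, (T (x, 0)).2 = 0) :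
    ∀ u v : H × ℂ, ipStd (T u) (T v) = ipStd u v := by
  intro u v
  have h1 := hG (u.1, 0) (v.1, 0)
  have h2 := hG ((0:H), (1:ℂ)) ((0:H), (1:ℂ))
  simp only [formA, hc, hb, inner_zero_left, map_zero, mul_zero, sub_zero, map_one, mul_one,
    zero_sub, inner_zero_right] at h1 h2
  have hu1 : (T u).1 = (T (u.1, 0)).1 := by rw [T_comp]; simp [hb]
  have hu2 : (T u).2 = u.2 * (T (0,1)).2 := by rw [T_comp]; simp [hc]
  have hv1 : (T v).1 = (T (v.1, 0)).1 := by rw [T_comp]; simp [hb]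
  have hv2 : (T v).2 = v.2 * (T (0,1)).2 := by rw [T_comp]; simp [hc]
  simp only [ipStd, hu1, hu2, hv1, hv2, map_mul]
  linear_combination h1 - (u.2 * (starRingEnd ℂ) v.2) * h2

private lemma formA_self (x : H) : formA ((x,1) : H × ℂ) ((x,1) : H × ℂ) = (‖x‖:ℂ)^2 - 1 := by
  simp [formA, inner_self_eq_norm_sq_to_K]

private lemma formA_cross (x : H) : formA ((x,1) : H × ℂ) ((-x,1) : H × ℂ) = -(‖x‖:ℂ)^2 - 1 := by
  simp [formA, inner_neg_left, inner_self_eq_norm_sq_to_K]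

private lemma norm_one_of_eigen (T : (H × ℂ) →L[ℂ] (H × ℂ)) (hT : memG T)
    (hnotU : ¬ ∀ u v : H × ℂ, ipStd (T u) (T v) = ipStd u v)
    (x₀ : H) (lam₁ lam₂ : ℂ)
    (h1 : T (x₀, 1) = lam₁ • ((x₀, 1) : H × ℂ))
    (h2 : T (-x₀, 1) = lam₂ • ((-x₀, 1) : H × ℂ)) : ‖x₀‖ = 1 := by
  by_contra hne
  obtain ⟨hbij, hG⟩ := hT
  have hKne : ((‖x₀‖:ℂ)^2 - 1) ≠ 0 := by
    intro h
    apply hne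
    have h' : ((‖x₀‖^2 - 1 : ℝ) : ℂ) = 0 := by push_cast; linear_combination h
    have := Complex.ofReal_eq_zero.mp h'
    nlinarith [norm_nonneg x₀]
  have hCne : (-(‖x₀‖:ℂ)^2 - 1) ≠ 0 := by
    intro h
    have h' : ((‖x₀‖^2 + 1 : ℝ) : ℂ) = 0 := by push_cast; linear_combination -h
    have := Complex.ofReal_eq_zero.mp h'
    nlinarith [norm_nonneg x₀]
  have hC1 : lam₁ * conj lam₁ * ((‖x₀‖:ℂ)^2 - 1) = (‖x₀‖:ℂ)^2 - 1 := by
    have := hG (x₀,1) (x₀,1)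
    rwa [h1, formA_smul, formA_self] at this
  have hU1 : lam₁ * conj lam₁ = 1 :=
    mul_right_cancel₀ hKne (show lam₁ * conj lam₁ * ((‖x₀‖:ℂ)^2 - 1) = 1 * ((‖x₀‖:ℂ)^2 - 1) by
      linear_combination hC1)
  have hcross : lam₁ * conj lam₂ * (-(‖x₀‖:ℂ)^2 - 1) = -(‖x₀‖:ℂ)^2 - 1 := by
    have := hG (x₀,1) (-x₀,1)
    rwa [h1, h2, formA_smul, formA_cross] at this
  have hU12 : lam₁ * conj lam₂ = 1 :=
    mul_right_cancel₀ hCne (show lam₁ * conj lam₂ * (-(‖x₀‖:ℂ)^2 - 1) = 1 * (-(‖x₀‖:ℂ)^2 - 1) by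
      linear_combination hcross)
  have hl1 : lam₁ ≠ 0 := by
    intro h; rw [h] at hU1; simp at hU1
  have heq : lam₂ = lam₁ := by
    have hc : conj lam₂ = conj lam₁ := mul_left_cancel₀ hl1 (hU12.trans hU1.symm)
    have := congrArg (starRingEnd ℂ) hc
    simpa using this
  rw [heq] at h2
  have hsum : (2:ℂ) • T ((0:H), (1:ℂ)) = lam₁ • ((2:ℂ) • ((0:H),(1:ℂ))) := by
    have hdec : ((0:H),(2:ℂ)) = ((x₀,1) : H × ℂ) + ((-x₀,1) : H × ℂ) := by
      simp [Prod.ext_iff]; ring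
    have h2' : ((0:H),(2:ℂ)) = (2:ℂ) • (((0:H),(1:ℂ)) : H × ℂ) := by simp [Prod.ext_iff]
    have := congrArg T hdec
    rw [map_add, h1, h2, ← smul_add, ← hdec, h2', map_smul] at this
    exact this
  have hT01 : T ((0:H),(1:ℂ)) = lam₁ • (((0:H),(1:ℂ)) : H × ℂ) := by
    rw [smul_comm] at hsum
    exact smul_right_injective _ (two_ne_zero) hsum
  have hb0 : (T ((0:H),(1:ℂ))).1 = 0 := by rw [hT01]; simp
  have hc0 : ∀ x : H, (T (x,0)).2 = 0 := by
    intro x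
    have h := hG (x, 0) ((0:H), (1:ℂ))
    rw [hT01, formA_smul_right] at h
    have hval : formA ((x, 0) : H × ℂ) (((0:H),(1:ℂ)) : H × ℂ) = 0 := by simp [formA]
    rw [hval] at h
    have hform : formA (T (x,0)) (((0:H),(1:ℂ)) : H × ℂ) = -(T (x,0)).2 := by
      simp [formA]
    rw [hform] at h
    have hcl1 : conj lam₁ ≠ 0 := by
      intro hcc; rw [hcc] at hU1; simp at hU1
    have := mul_eq_zero.mp h
    rcases this with h' | h'
    · exact absurd h' hcl1
    · exact neg_eq_zero.mp h'
  exact hnotU (unitary_of T hG hb0 hc0)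

section Rel
variable (T Tadj : (H × ℂ) →L[ℂ] (H × ℂ))

-- G relations
private lemma hG1 (hG : ∀ u v : H × ℂ, formA (T u) (T v) = formA u v) (x y : H) :
    ⟪(T (y,0)).1, (T (x,0)).1⟫ = ⟪y, x⟫ + (T (x,0)).2 * conj (T (y,0)).2 := by
  have := hG (x, 0) (y, 0)
  simp only [formA] at this
  simp only [map_zero, mul_zero, sub_zero] at this
  linear_combination this

private lemma hG2 (hG : ∀ u v : H × ℂ, formA (T u) (T v) = formA u v) (x : H) :
    ⟪(T ((0:H),(1:ℂ))).1, (T (x,0)).1⟫ = (T (x,0)).2 * conj (T ((0:H),(1:ℂ))).2 := by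
  have := hG (x, 0) ((0:H), (1:ℂ))
  simp only [formA, inner_zero_left, map_zero, mul_zero, sub_zero, map_one, mul_one,
    zero_mul, zero_sub, sub_eq_zero] at this
  linear_combination this

private lemma hG3 (hG : ∀ u v : H × ℂ, formA (T u) (T v) = formA u v) :
    (T ((0:H),(1:ℂ))).2 * conj (T ((0:H),(1:ℂ))).2
      = 1 + ⟪(T ((0:H),(1:ℂ))).1, (T ((0:H),(1:ℂ))).1⟫ := by
  have := hG ((0:H), (1:ℂ)) ((0:H), (1:ℂ))
  simp only [formA, inner_zero_left, map_one, mul_one, zero_sub] at this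
  linear_combination -this

private lemma hD0 (hG : ∀ u v : H × ℂ, formA (T u) (T v) = formA u v) :
    (T ((0:H),(1:ℂ))).2 ≠ 0 := by
  intro h
  have h3 := hG3 T hG
  rw [h] at h3
  simp only [zero_mul, map_zero, mul_zero] at h3
  have hb : ⟪(T ((0:H),(1:ℂ))).1, (T ((0:H),(1:ℂ))).1⟫ = -1 := by linear_combination -h3
  have h5 : RCLike.re ⟪(T ((0:H),(1:ℂ))).1, (T ((0:H),(1:ℂ))).1⟫ = -1 := by rw [hb]; simp
  have h6 : (0:ℝ) ≤ RCLike.re ⟪(T ((0:H),(1:ℂ))).1, (T ((0:H),(1:ℂ))).1⟫ := inner_self_nonneg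
  linarith

-- adjoint relations
private lemma Adj1 (hadj : ∀ u v : H × ℂ, ipStd (T u) v = ipStd u (Tadj v)) (x y : H) : ⟪(Tadj (y,0)).1, x⟫ = ⟪y, (T (x,0)).1⟫ := by
  have := hadj (x, 0) (y, 0)
  simp only [ipStd, map_zero, mul_zero, add_zero, zero_mul, zero_add] at this
  linear_combination -this

private lemma Adj2 (hadj : ∀ u v : H × ℂ, ipStd (T u) v = ipStd u (Tadj v)) (y : H) : (Tadj (y,0)).2 = ⟪(T ((0:H),(1:ℂ))).1, y⟫ := by
  have := hadj ((0:H), (1:ℂ)) (y, 0)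
  simp only [ipStd, map_zero, mul_zero, add_zero, inner_zero_right, zero_add, one_mul] at this
  have := congrArg (starRingEnd ℂ) this
  simp only [RingHomCompTriple.comp_apply, RingHom.id_apply, starRingEnd_self_apply] at this
  rw [← this, ← inner_conj_symm]
  simp

private lemma Adj3 (hadj : ∀ u v : H × ℂ, ipStd (T u) v = ipStd u (Tadj v)) (x : H) : (T (x,0)).2 = ⟪(Tadj ((0:H),(1:ℂ))).1, x⟫ := by
  have := hadj (x, 0) ((0:H), (1:ℂ))
  simp only [ipStd, inner_zero_left, map_one, mul_one, zero_add, zero_mul, add_zero] at this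
  linear_combination this

private lemma Adj4 (hadj : ∀ u v : H × ℂ, ipStd (T u) v = ipStd u (Tadj v)) : (Tadj ((0:H),(1:ℂ))).2 = conj (T ((0:H),(1:ℂ))).2 := by
  have := hadj ((0:H), (1:ℂ)) ((0:H), (1:ℂ))
  simp only [ipStd, inner_zero_left, inner_zero_right, map_one, mul_one, zero_add, one_mul] at this
  have := congrArg (starRingEnd ℂ) this
  simpa using this.symm

end Rel

private lemma R1 (T Tadj : (H × ℂ) →L[ℂ] (H × ℂ))
    (hG : ∀ u v : H × ℂ, formA (T u) (T v) = formA u v)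
    (hadj : ∀ u v : H × ℂ, ipStd (T u) v = ipStd u (Tadj v)) :
    (Tadj ((T ((0:H),(1:ℂ))).1, 0)).1
      = (T ((0:H),(1:ℂ))).2 • (Tadj ((0:H),(1:ℂ))).1 := by
  apply ext_inner_right ℂ
  intro x
  rw [Adj1 T Tadj hadj x _, hG2 T hG x, inner_smul_left, ← Adj3 T Tadj hadj x]
  ring

private lemma R2 (T Tadj : (H × ℂ) →L[ℂ] (H × ℂ))
    (hG : ∀ u v : H × ℂ, formA (T u) (T v) = formA u v)
    (hadj : ∀ u v : H × ℂ, ipStd (T u) v = ipStd u (Tadj v)) (y : H) :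
    (Tadj ((T (y,0)).1, 0)).1
      = y + ⟪(Tadj ((0:H),(1:ℂ))).1, y⟫ • (Tadj ((0:H),(1:ℂ))).1 := by
  apply ext_inner_right ℂ
  intro x
  rw [Adj1 T Tadj hadj x _, hG1 T hG x y, inner_add_left, inner_smul_left,
    ← Adj3 T Tadj hadj x, ← Adj3 T Tadj hadj y]
  ring

private lemma Tadj_smul (Tadj : (H × ℂ) →L[ℂ] (H × ℂ)) (s : ℂ) (x : H) :
    Tadj (s • x, 0) = s • Tadj (x, 0) := T_smul Tadj s x

private lemma normal_of_eigen (T : (H × ℂ) →L[ℂ] (H × ℂ)) (hT : memG T)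
    (x₀ : H) (lam₁ lam₂ : ℂ)
    (h1 : T (x₀, 1) = lam₁ • ((x₀, 1) : H × ℂ))
    (h2 : T (-x₀, 1) = lam₂ • ((-x₀, 1) : H × ℂ)) :
    ∃ Tadj : (H × ℂ) →L[ℂ] (H × ℂ),
      (∀ u v : H × ℂ, ipStd (T u) v = ipStd u (Tadj v)) ∧ Tadj ∘L T = T ∘L Tadj := by
  obtain ⟨hbij, hG⟩ := hT
  set J : (H × ℂ) →L[ℂ] (H × ℂ) :=
    (ContinuousLinearMap.fst ℂ H ℂ).prod (-(ContinuousLinearMap.snd ℂ H ℂ)) with hJdef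
  have hJ : ∀ u : H × ℂ, J u = (u.1, -u.2) := fun u => rfl
  have hJJ : ∀ w : H × ℂ, J (J w) = w := by intro w; rw [hJ, hJ]; simp
  have hJinj : Function.Injective J := by
    intro p q hpq
    have := congrArg J hpq
    rwa [hJJ, hJJ] at this
  set e : (H × ℂ) ≃L[ℂ] (H × ℂ) :=
    ContinuousLinearEquiv.ofBijective T (LinearMap.ker_eq_bot.mpr hbij.1)
      (LinearMap.range_eq_top.mpr hbij.2) with he
  have hTe : ∀ u, T (e.symm u) = u := fun u =>
    ContinuousLinearEquiv.ofBijective_apply_symm_apply T _ _ u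
  set Tadj : (H × ℂ) →L[ℂ] (H × ℂ) :=
    J ∘L (((e.symm : (H × ℂ) ≃L[ℂ] (H × ℂ)) : (H × ℂ) →L[ℂ] (H × ℂ)) ∘L J) with hTadjdef
  have hTadj : ∀ u, Tadj u = J (e.symm (J u)) := fun u => rfl
  have hipJ : ∀ p q : H × ℂ, ipStd p (J q) = formA p q := by
    intro p q
    simp only [ipStd, formA, hJ, map_neg, mul_neg]
    ring
  have hadj : ∀ u v : H × ℂ, ipStd (T u) v = ipStd u (Tadj v) := by
    intro u v
    calc ipStd (T u) v = ipStd (T u) (J (J v)) := by rw [hJJ]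
    _ = formA (T u) (J v) := hipJ _ _
    _ = formA (T u) (T (e.symm (J v))) := by rw [hTe]
    _ = formA u (e.symm (J v)) := hG _ _
    _ = ipStd u (J (e.symm (J v))) := (hipJ _ _).symm
    _ = ipStd u (Tadj v) := by rw [hTadj]
  refine ⟨Tadj, hadj, ?_⟩
  -- abbreviations (as plain terms)
  -- b = (T (0,1)).1, D = (T (0,1)).2, v = (Tadj (0,1)).1
  have hneg : T ((-x₀ : H), (0:ℂ)) = - T (x₀, 0) := by
    rw [show ((-x₀,(0:ℂ)) : H × ℂ) = -((x₀,0) : H × ℂ) by simp [Prod.ext_iff], map_neg]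
  have E1a : (T (x₀,0)).1 + (T ((0:H),(1:ℂ))).1 = lam₁ • x₀ := by
    have h := congrArg Prod.fst h1
    rw [T_comp] at h
    simpa using h
  have E1b : (T (x₀,0)).2 + (T ((0:H),(1:ℂ))).2 = lam₁ := by
    have h := congrArg Prod.snd h1
    rw [T_comp] at h
    simpa using h
  have E2a : -(T (x₀,0)).1 + (T ((0:H),(1:ℂ))).1 = -(lam₂ • x₀) := by
    have h := congrArg Prod.fst h2
    rw [T_comp, hneg] at h
    simpa using h
  have E2b : -(T (x₀,0)).2 + (T ((0:H),(1:ℂ))).2 = lam₂ := by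
    have h := congrArg Prod.snd h2
    rw [T_comp, hneg] at h
    simpa using h
  have hD0' : (T ((0:H),(1:ℂ))).2 ≠ 0 := hD0 T hG
  have hl1 : lam₁ ≠ 0 := by
    intro h
    have h0 : T (x₀, 1) = T 0 := by rw [h1, h, zero_smul, map_zero]
    have h3 := congrArg Prod.snd (hbij.1 h0)
    simp at h3
  have hl2 : lam₂ ≠ 0 := by
    intro h
    have h0 : T (-x₀, 1) = T 0 := by rw [h2, h, zero_smul, map_zero]
    have h3 := congrArg Prod.snd (hbij.1 h0)
    simp at h3
  have hCne : (-(‖x₀‖:ℂ)^2 - 1) ≠ 0 := by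
    intro h
    have h' : ((‖x₀‖^2 + 1 : ℝ) : ℂ) = 0 := by push_cast; linear_combination -h
    have := Complex.ofReal_eq_zero.mp h'
    nlinarith [norm_nonneg x₀]
  have hcross : lam₁ * conj lam₂ * (-(‖x₀‖:ℂ)^2 - 1) = -(‖x₀‖:ℂ)^2 - 1 := by
    have := hG (x₀,1) (-x₀,1)
    rwa [h1, h2, formA_smul, formA_cross] at this
  have hconj : lam₁ * conj lam₂ = 1 :=
    mul_right_cancel₀ hCne (show lam₁ * conj lam₂ * (-(‖x₀‖:ℂ)^2 - 1)
      = 1 * (-(‖x₀‖:ℂ)^2 - 1) by linear_combination hcross)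
  have hD : (T ((0:H),(1:ℂ))).2 = (lam₁ + lam₂)/2 := by linear_combination (E1b + E2b)/2
  have hbx : (T ((0:H),(1:ℂ))).1 = ((lam₁ - lam₂)/2) • x₀ := by
    linear_combination (norm := module) ((2:ℂ)⁻¹) • E1a + ((2:ℂ)⁻¹) • E2a
  have hax : (T (x₀,0)).1 = ((lam₁ + lam₂)/2) • x₀ := by
    linear_combination (norm := module) ((2:ℂ)⁻¹) • E1a - ((2:ℂ)⁻¹) • E2a
  have hcx : (T (x₀,0)).2 = (lam₁ - lam₂)/2 := by linear_combination (E1b - E2b)/2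
  have hADJ3 := Adj3 T Tadj hadj
  have hvx : ⟪(Tadj ((0:H),(1:ℂ))).1, x₀⟫ = (lam₁ - lam₂)/2 := by rw [← hADJ3 x₀]; exact hcx
  have hR1' := R1 T Tadj hG hadj
  have hR2' := R2 T Tadj hG hadj x₀
  have hax' : (T ((0:H),(1:ℂ))).2 • (Tadj (x₀,0)).1
      = x₀ + ((lam₁ - lam₂)/2) • (Tadj ((0:H),(1:ℂ))).1 := by
    rw [hax, Tadj_smul] at hR2'
    rw [hvx] at hR2'
    rw [hD]
    rw [← hR2']
    simp
  have hmu : ((lam₁ - lam₂)/2) • (Tadj (x₀,0)).1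
      = (T ((0:H),(1:ℂ))).2 • (Tadj ((0:H),(1:ℂ))).1 := by
    rw [hbx, Tadj_smul] at hR1'
    rw [← hR1']
    simp
  have hveq : (lam₁*lam₂) • (Tadj ((0:H),(1:ℂ))).1 = ((lam₁ - lam₂)/2) • x₀ := by
    have h := congrArg (fun w => ((lam₁ - lam₂)/2) • w) hax'
    simp only [smul_add] at h
    rw [smul_comm ((lam₁ - lam₂)/2) ((T ((0:H),(1:ℂ))).2), hmu, hD] at h
    linear_combination (norm := module) h
  have hgd : lam₁ * lam₂ * conj ((T ((0:H),(1:ℂ))).2) = (T ((0:H),(1:ℂ))).2 := by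
    have hDbar : conj ((T ((0:H),(1:ℂ))).2) = (conj lam₁ + conj lam₂)/2 := by
      rw [hD]
      rw [map_div₀, map_add]
      congr 1
      exact Complex.conj_ofNat 2
    have hconj' : conj lam₁ * lam₂ = 1 := by
      have := congrArg (starRingEnd ℂ) hconj
      simpa using this
    rw [hDbar, hD]
    linear_combination (lam₁/2) * hconj' + (lam₂/2) * hconj
  have hstar : (Tadj ((Tadj ((0:H),(1:ℂ))).1, 0)).1
      = conj ((T ((0:H),(1:ℂ))).2) • (Tadj ((0:H),(1:ℂ))).1 := by
    have hne : (lam₁ * lam₂ * (T ((0:H),(1:ℂ))).2) ≠ 0 :=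
      mul_ne_zero (mul_ne_zero hl1 hl2) hD0'
    apply smul_right_injective H hne
    have hsc : lam₁*lam₂ + ((lam₁-lam₂)/2)*((lam₁-lam₂)/2)
        = (T ((0:H),(1:ℂ))).2 * (T ((0:H),(1:ℂ))).2 := by rw [hD]; ring
    have hsc2 : lam₁*lam₂*(T ((0:H),(1:ℂ))).2 * conj ((T ((0:H),(1:ℂ))).2)
        = (T ((0:H),(1:ℂ))).2 * (T ((0:H),(1:ℂ))).2 := by
      linear_combination (T ((0:H),(1:ℂ))).2 * hgd
    calc (lam₁ * lam₂ * (T ((0:H),(1:ℂ))).2) • (Tadj ((Tadj ((0:H),(1:ℂ))).1, 0)).1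
        = (T ((0:H),(1:ℂ))).2 • ((lam₁*lam₂) • (Tadj ((Tadj ((0:H),(1:ℂ))).1, 0)).1) := by
          match_scalars; ring
      _ = (T ((0:H),(1:ℂ))).2 • (Tadj ((lam₁*lam₂) • (Tadj ((0:H),(1:ℂ))).1, 0)).1 := by
          rw [Tadj_smul]; simp
      _ = (T ((0:H),(1:ℂ))).2 • (Tadj (((lam₁-lam₂)/2) • x₀, 0)).1 := by rw [hveq]
      _ = (T ((0:H),(1:ℂ))).2 • (((lam₁-lam₂)/2) • (Tadj (x₀, 0)).1) := by
          rw [Tadj_smul]; simp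
      _ = ((lam₁-lam₂)/2) • ((T ((0:H),(1:ℂ))).2 • (Tadj (x₀, 0)).1) := smul_comm _ _ _
      _ = ((lam₁-lam₂)/2) • (x₀ + ((lam₁ - lam₂)/2) • (Tadj ((0:H),(1:ℂ))).1) := by rw [hax']
      _ = (lam₁ * lam₂ * (T ((0:H),(1:ℂ))).2) • (conj ((T ((0:H),(1:ℂ))).2) • (Tadj ((0:H),(1:ℂ))).1) := by
          rw [smul_add, ← hveq]
          match_scalars
          linear_combination hsc - hsc2
  have hca : ∀ x : H, (T ((T (x,0)).1, 0)).2 = (T ((0:H),(1:ℂ))).2 * (T (x,0)).2 := by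
    intro x
    rw [hADJ3 ((T (x,0)).1)]
    rw [← Adj1 T Tadj hadj x ((Tadj ((0:H),(1:ℂ))).1)]
    rw [hstar, inner_smul_left, Complex.conj_conj]
    rw [← hADJ3 x]
  have hab : (T ((T ((0:H),(1:ℂ))).1, 0)).1 = (T ((0:H),(1:ℂ))).2 • (T ((0:H),(1:ℂ))).1 := by
    conv_lhs => rw [hbx, T_smul]
    rw [Prod.smul_fst, hax, hbx, hD]
    match_scalars
    ring
  -- the key commutation identity (J T)^2 = (T J)^2
  have sum1 : ∀ (P : H) (s : ℂ), T (P + s • (T ((0:H),(1:ℂ))).1, 0)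
      = T (P, 0) + s • T ((T ((0:H),(1:ℂ))).1, 0) := by
    intro P s; rw [T_add, T_smul]
  have key : ∀ w : H × ℂ, T (J (T (J w))) = J (T (J (T w))) := by
    intro w
    obtain ⟨x, z⟩ := w
    have cL : T (J (T (J ((x,z) : H × ℂ))))
        = T ((T (x,0)).1, 0) + (-z) • T ((T ((0:H),(1:ℂ))).1, 0)
          + (-((T (x,0)).2 + (-z) * (T ((0:H),(1:ℂ))).2)) • T ((0:H),(1:ℂ)) := by
      rw [hJ ((x,z) : H × ℂ)]
      rw [show ((x, -z) : H × ℂ).1 = x from rfl]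
      rw [T_comp T x (-z), hJ]
      rw [T_apply]
      rw [sum1]
    have cR : T ((x,z) : H × ℂ)
        = ((T (x,0)).1 + z • (T ((0:H),(1:ℂ))).1, (T (x,0)).2 + z * (T ((0:H),(1:ℂ))).2) :=
      T_comp T x z
    have cR2 : T (J (T ((x,z) : H × ℂ)))
        = T ((T (x,0)).1, 0) + z • T ((T ((0:H),(1:ℂ))).1, 0)
          + (-((T (x,0)).2 + z * (T ((0:H),(1:ℂ))).2)) • T ((0:H),(1:ℂ)) := by
      rw [cR, hJ]
      rw [T_apply]
      rw [sum1]
    rw [cL, cR2, hJ]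
    rw [Prod.ext_iff]
    constructor
    · simp only [Prod.fst_add, Prod.smul_fst]
      rw [hab]
      match_scalars <;> ring
    · simp only [Prod.snd_add, Prod.smul_snd, smul_eq_mul]
      rw [hca x]
      ring
  -- conclude
  apply ContinuousLinearMap.ext
  intro u
  simp only [ContinuousLinearMap.comp_apply]
  have hTJinj : Function.Injective (fun w : H × ℂ => T (J w)) := by
    intro p q hpq
    exact hJinj (hbij.1 hpq)
  apply hTJinj
  show T (J (Tadj (T u))) = T (J (T (Tadj u)))
  rw [hTadj (T u), hTadj u, hJJ, hTe]
  rw [key (e.symm (J u)), hTe, hJJ]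

private lemma eigen_of_normal (T Tadj : (H × ℂ) →L[ℂ] (H × ℂ)) (hT : memG T)
    (hnotU : ¬ ∀ u v : H × ℂ, ipStd (T u) (T v) = ipStd u v)
    (hadj : ∀ u v : H × ℂ, ipStd (T u) v = ipStd u (Tadj v))
    (hcomm : Tadj ∘L T = T ∘L Tadj) :
    ∃ (x₀ : H) (lam₁ lam₂ : ℂ),
      T (x₀, 1) = lam₁ • ((x₀, 1) : H × ℂ) ∧ T (-x₀, 1) = lam₂ • ((-x₀, 1) : H × ℂ) := by
  obtain ⟨hbij, hG⟩ := hT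
  have hcomm' : ∀ u : H × ℂ, Tadj (T u) = T (Tadj u) := by
    intro u
    have := congrArg (fun S : (H × ℂ) →L[ℂ] (H × ℂ) => S u) hcomm
    simpa using this
  have hADJ1 := Adj1 T Tadj hadj
  have hADJ2 := Adj2 T Tadj hadj
  have hADJ3 := Adj3 T Tadj hadj
  have hADJ4 := Adj4 T Tadj hadj
  have hR1' := R1 T Tadj hG hadj
  have hR2' := R2 T Tadj hG hadj
  have hD0' := hD0 T hG
  have hG3' := hG3 T hG
  have hTp : ∀ p : H × ℂ, T p = ((T (p.1,0)).1 + p.2 • (T ((0:H),(1:ℂ))).1,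
      (T (p.1,0)).2 + p.2 * (T ((0:H),(1:ℂ))).2) := fun p => T_comp T p.1 p.2
  have hTadjp : ∀ p : H × ℂ, Tadj p = ((Tadj (p.1,0)).1 + p.2 • (Tadj ((0:H),(1:ℂ))).1,
      (Tadj (p.1,0)).2 + p.2 * (Tadj ((0:H),(1:ℂ))).2) := fun p => T_comp Tadj p.1 p.2
  -- commutation at (0,1)
  have hc1 := hcomm' ((0:H),(1:ℂ))
  rw [hTadjp (T ((0:H),(1:ℂ))), hTp (Tadj ((0:H),(1:ℂ)))] at hc1
  have hc1a := congrArg Prod.fst hc1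
  have hc1b := congrArg Prod.snd hc1
  simp only [] at hc1a hc1b
  rw [hADJ4] at hc1a hc1b
  -- hc1a : (Tadj ((T(0,1)).1,0)).1 + D • v = (T (v,0)).1 + conj D • b
  have hR5 : (T ((Tadj ((0:H),(1:ℂ))).1, 0)).1
      = (T ((0:H),(1:ℂ))).2 • (Tadj ((0:H),(1:ℂ))).1
        + (T ((0:H),(1:ℂ))).2 • (Tadj ((0:H),(1:ℂ))).1
        - conj ((T ((0:H),(1:ℂ))).2) • (T ((0:H),(1:ℂ))).1 := by
    rw [hR1'] at hc1a
    linear_combination (norm := module) -hc1a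
  have hbb : ⟪(T ((0:H),(1:ℂ))).1, (T ((0:H),(1:ℂ))).1⟫
      = ⟪(Tadj ((0:H),(1:ℂ))).1, (Tadj ((0:H),(1:ℂ))).1⟫ := by
    rw [hADJ2, hADJ3] at hc1b
    linear_combination hc1b
  -- commutation at (x,0)
  have hc2a : ∀ x : H, (Tadj ((T (x,0)).1, 0)).1 + (T (x,0)).2 • (Tadj ((0:H),(1:ℂ))).1
      = (T ((Tadj (x,0)).1, 0)).1 + (Tadj (x,0)).2 • (T ((0:H),(1:ℂ))).1 := by
    intro x
    have hc := hcomm' (x, 0)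
    rw [hTadjp (T (x,0)), hTp (Tadj (x,0))] at hc
    have := congrArg Prod.fst hc
    simpa using this
  have hR3 : ∀ x : H, (T ((Tadj (x,0)).1, 0)).1
      = x + ⟪(Tadj ((0:H),(1:ℂ))).1, x⟫ • (Tadj ((0:H),(1:ℂ))).1
          + ⟪(Tadj ((0:H),(1:ℂ))).1, x⟫ • (Tadj ((0:H),(1:ℂ))).1
          - ⟪(T ((0:H),(1:ℂ))).1, x⟫ • (T ((0:H),(1:ℂ))).1 := by
    intro x
    have h := hc2a x
    rw [hR2' x, hADJ3 x, hADJ2 x] at h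
    linear_combination (norm := module) -h
  have hR6 : ((T ((0:H),(1:ℂ))).2 * (T ((0:H),(1:ℂ))).2
        - ⟪(Tadj ((0:H),(1:ℂ))).1, (T ((0:H),(1:ℂ))).1⟫) • (Tadj ((0:H),(1:ℂ))).1
      = (T ((0:H),(1:ℂ))).1 := by
    have h := hR3 ((T ((0:H),(1:ℂ))).1)
    rw [hR1', T_smul, Prod.smul_fst, hR5] at h
    have hg3v : ((T ((0:H),(1:ℂ))).2 * conj ((T ((0:H),(1:ℂ))).2)) • (T ((0:H),(1:ℂ))).1
        = (1 + ⟪(T ((0:H),(1:ℂ))).1, (T ((0:H),(1:ℂ))).1⟫) • (T ((0:H),(1:ℂ))).1 := by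
      rw [hG3']
    have hbbv : ⟪(T ((0:H),(1:ℂ))).1, (T ((0:H),(1:ℂ))).1⟫
        • (T ((0:H),(1:ℂ))).1
        = ⟪(Tadj ((0:H),(1:ℂ))).1, (Tadj ((0:H),(1:ℂ))).1⟫ • (T ((0:H),(1:ℂ))).1 := by
      rw [hbb]
    linear_combination (norm := module) ((2:ℂ)⁻¹) • h + ((2:ℂ)⁻¹) • hg3v
  -- b ≠ 0
  have hbne : (T ((0:H),(1:ℂ))).1 ≠ 0 := by
    intro hb0
    apply hnotU
    apply unitary_of T hG hb0
    intro x
    have hvv : ⟪(Tadj ((0:H),(1:ℂ))).1, (Tadj ((0:H),(1:ℂ))).1⟫ = 0 := by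
      rw [← hbb, hb0, inner_zero_left]
    have hv0 : (Tadj ((0:H),(1:ℂ))).1 = 0 := inner_self_eq_zero.mp hvv
    rw [hADJ3 x, hv0, inner_zero_left]
  have hgamma0 : ((T ((0:H),(1:ℂ))).2 * (T ((0:H),(1:ℂ))).2
      - ⟪(Tadj ((0:H),(1:ℂ))).1, (T ((0:H),(1:ℂ))).1⟫) ≠ 0 := by
    intro h
    rw [h, zero_smul] at hR6
    exact hbne hR6.symm
  have hvne : (Tadj ((0:H),(1:ℂ))).1 ≠ 0 := by
    intro h
    rw [h, smul_zero] at hR6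
    exact hbne hR6.symm
  have hvb : ⟪(Tadj ((0:H),(1:ℂ))).1, (T ((0:H),(1:ℂ))).1⟫
      = ((T ((0:H),(1:ℂ))).2 * (T ((0:H),(1:ℂ))).2
          - ⟪(Tadj ((0:H),(1:ℂ))).1, (T ((0:H),(1:ℂ))).1⟫)
        * ⟪(Tadj ((0:H),(1:ℂ))).1, (Tadj ((0:H),(1:ℂ))).1⟫ := by
    conv_lhs => rw [← hR6]
    rw [inner_smul_right]
  have hvbne : ⟪(Tadj ((0:H),(1:ℂ))).1, (T ((0:H),(1:ℂ))).1⟫ ≠ 0 := by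
    rw [hvb]
    exact mul_ne_zero hgamma0 (fun h => hvne (inner_self_eq_zero.mp h))
  have hvv : ⟪(Tadj ((0:H),(1:ℂ))).1, (Tadj ((0:H),(1:ℂ))).1⟫
      = (T ((0:H),(1:ℂ))).2 * conj ((T ((0:H),(1:ℂ))).2) - 1 := by
    rw [← hbb]
    linear_combination -hG3'
  have e1 : ((T ((0:H),(1:ℂ))).2 * (T ((0:H),(1:ℂ))).2
        - ⟪(Tadj ((0:H),(1:ℂ))).1, (T ((0:H),(1:ℂ))).1⟫)
      * ((T ((0:H),(1:ℂ))).2 * conj ((T ((0:H),(1:ℂ))).2))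
      = (T ((0:H),(1:ℂ))).2 * (T ((0:H),(1:ℂ))).2 := by
    linear_combination (-((T ((0:H),(1:ℂ))).2 * (T ((0:H),(1:ℂ))).2
      - ⟪(Tadj ((0:H),(1:ℂ))).1, (T ((0:H),(1:ℂ))).1⟫)) * hvv - hvb
  have hgd : ((T ((0:H),(1:ℂ))).2 * (T ((0:H),(1:ℂ))).2
        - ⟪(Tadj ((0:H),(1:ℂ))).1, (T ((0:H),(1:ℂ))).1⟫) * conj ((T ((0:H),(1:ℂ))).2)
      = (T ((0:H),(1:ℂ))).2 := by
    apply mul_left_cancel₀ hD0'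
    linear_combination e1
  have hab : (T ((T ((0:H),(1:ℂ))).1, 0)).1 = (T ((0:H),(1:ℂ))).2 • (T ((0:H),(1:ℂ))).1 := by
    calc (T ((T ((0:H),(1:ℂ))).1, 0)).1
        = (T (((T ((0:H),(1:ℂ))).2 * (T ((0:H),(1:ℂ))).2
            - ⟪(Tadj ((0:H),(1:ℂ))).1, (T ((0:H),(1:ℂ))).1⟫) • (Tadj ((0:H),(1:ℂ))).1, 0)).1 := by
          rw [hR6]
      _ = ((T ((0:H),(1:ℂ))).2 * (T ((0:H),(1:ℂ))).2
            - ⟪(Tadj ((0:H),(1:ℂ))).1, (T ((0:H),(1:ℂ))).1⟫) • (T ((Tadj ((0:H),(1:ℂ))).1, 0)).1 := by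
          rw [T_smul, Prod.smul_fst]
      _ = (T ((0:H),(1:ℂ))).2 • (T ((0:H),(1:ℂ))).1 := by
          have h6 := hR6
          have hgd' := hgd
          set w := ⟪(Tadj ((0:H),(1:ℂ))).1, (T ((0:H),(1:ℂ))).1⟫ with hw
          rw [hR5, ← h6]
          match_scalars
          linear_combination (-((T ((0:H),(1:ℂ))).2 * (T ((0:H),(1:ℂ))).2 - w)) * hgd'
  -- square root
  obtain ⟨s, hs⟩ : ∃ s : ℂ, s ^ 2 = ⟪(Tadj ((0:H),(1:ℂ))).1, (T ((0:H),(1:ℂ))).1⟫ :=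
    ⟨(⟪(Tadj ((0:H),(1:ℂ))).1, (T ((0:H),(1:ℂ))).1⟫) ^ (((2:ℕ):ℂ))⁻¹,
      Complex.cpow_nat_inv_pow (⟪(Tadj ((0:H),(1:ℂ))).1, (T ((0:H),(1:ℂ))).1⟫) (two_ne_zero)⟩
  have hsne : s ≠ 0 := by
    intro h
    rw [h] at hs
    simp at hs
    exact hvbne hs.symm
  have hTb2 : (T ((T ((0:H),(1:ℂ))).1, 0)).2 = s ^ 2 := by
    rw [hADJ3, hs]
  refine ⟨s⁻¹ • (T ((0:H),(1:ℂ))).1, (T ((0:H),(1:ℂ))).2 + s, (T ((0:H),(1:ℂ))).2 - s, ?_, ?_⟩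
  · rw [T_comp]
    rw [Prod.ext_iff]
    constructor
    · simp only [Prod.smul_fst]
      rw [T_smul, Prod.smul_fst, hab]
      match_scalars
      field_simp
      try ring
    · simp only [Prod.smul_snd, smul_eq_mul]
      rw [T_smul, Prod.smul_snd, smul_eq_mul, hTb2]
      field_simp
      try ring
  · rw [T_comp]
    have hnegb : T (-(s⁻¹ • (T ((0:H),(1:ℂ))).1), 0) = - T (s⁻¹ • (T ((0:H),(1:ℂ))).1, 0) := by
      rw [show ((-(s⁻¹ • (T ((0:H),(1:ℂ))).1),(0:ℂ)) : H × ℂ)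
          = -((s⁻¹ • (T ((0:H),(1:ℂ))).1, 0) : H × ℂ) by simp [Prod.ext_iff], map_neg]
    rw [hnegb, T_smul]
    rw [Prod.ext_iff]
    constructor
    · simp only [Prod.fst_neg, Prod.smul_fst, Prod.snd_neg, Prod.smul_snd]
      rw [hab]
      match_scalars
      field_simp
      try ring
    · simp only [Prod.snd_neg, Prod.smul_snd, smul_eq_mul, Prod.smul_fst]
      rw [hTb2]
      field_simp
      try ring


/-- a non-unitary `T ∈ G` is normal (w.r.t. the standard Hilbert
structure of `H ⊕ ℂ`) iff it has eigenvectors `(x₀,1)` and `(-x₀,1)`; moreover any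
such `x₀` has norm one. -/
theorem nonunitary_normal_iff (T : (H × ℂ) →L[ℂ] (H × ℂ)) (hT : memG T)
    (hnotU : ¬ ∀ u v : H × ℂ, ipStd (T u) (T v) = ipStd u v) :
    ((∃ Tadj : (H × ℂ) →L[ℂ] (H × ℂ),
        (∀ u v : H × ℂ, ipStd (T u) v = ipStd u (Tadj v)) ∧
        Tadj ∘L T = T ∘L Tadj) ↔
      (∃ (x₀ : H) (lam₁ lam₂ : ℂ),
        T (x₀, 1) = lam₁ • ((x₀, 1) : H × ℂ) ∧
        T (-x₀, 1) = lam₂ • ((-x₀, 1) : H × ℂ))) ∧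
    (∀ (x₀ : H) (lam₁ lam₂ : ℂ),
      T (x₀, 1) = lam₁ • ((x₀, 1) : H × ℂ) →
      T (-x₀, 1) = lam₂ • ((-x₀, 1) : H × ℂ) → ‖x₀‖ = 1) := by
  constructor
  · constructor
    · rintro ⟨Tadj, hadj, hcomm⟩
      exact eigen_of_normal T Tadj hT hnotU hadj hcomm
    · rintro ⟨x₀, lam₁, lam₂, h1, h2⟩
      exact normal_of_eigen T hT x₀ lam₁ lam₂ h1 h2
  · intro x₀ lam₁ lam₂ h1 h2
    exact norm_one_of_eigen T hT hnotU x₀ lam₁ lam₂ h1 h2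

end
end

section
/- For all x₁, x₂, y₁, y₂ ∈ H with ‖x₁‖ = ‖x₂‖ = ‖y₁‖ = ‖y₂‖ = 1, x₁ ≠ x₂ and y₁ ≠ y₂, there exist T ∈ G and nonzero scalars μ₁, μ₂ ∈ ℂ such that T(x₁,1) = μ₁·(y₁,1) and T(x₂,1) = μ₂·(y₂,1). (The holomorphic automorphism group acts bi-transitively on the boundary of the unit ball.) -/
section
variable {H : Type*} [NormedAddCommGroup H] [InnerProductSpace ℂ H] [CompleteSpace H]

set_option linter.unusedSectionVars false

lemma formA_add_left (u u' v : H × ℂ) : formA (u + u') v = formA u v + formA u' v := by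
  simp [formA, inner_add_right]; ring

lemma formA_add_right (u v v' : H × ℂ) : formA u (v + v') = formA u v + formA u v' := by
  simp [formA, inner_add_left]; ring

lemma formA_smul_left (s : ℂ) (u v : H × ℂ) : formA (s • u) v = s * formA u v := by
  simp [formA, inner_smul_right]; ring

lemma formA_smul_right_s17 (s : ℂ) (u v : H × ℂ) : formA u (s • v) = (starRingEnd ℂ) s * formA u v := by
  simp [formA, inner_smul_left]; ring

lemma formA_conj (u v : H × ℂ) : (starRingEnd ℂ) (formA u v) = formA v u := by
  simp [formA, inner_conj_symm]; ring

lemma formA_sub_right (u v v' : H × ℂ) : formA u (v - v') = formA u v - formA u v' := by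
  simp [formA, inner_sub_left]; ring

lemma formA_sub_left (u u' v : H × ℂ) : formA (u - u') v = formA u v - formA u' v := by
  simp [formA, inner_sub_right]; ring

noncomputable def Afun (w : H × ℂ) : (H × ℂ) →L[ℂ] ℂ :=
  (innerSL ℂ w.1).comp (ContinuousLinearMap.fst ℂ H ℂ)
    - ((starRingEnd ℂ) w.2) • ContinuousLinearMap.snd ℂ H ℂ

lemma Afun_apply (w v : H × ℂ) : Afun w v = formA v w := by
  simp [Afun, formA]; ring

noncomputable def gMap (w : H × ℂ) (γ : ℂ) : (H × ℂ) →L[ℂ] (H × ℂ) :=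
  ContinuousLinearMap.id ℂ (H × ℂ) + γ • (Afun w).smulRight w

lemma gMap_apply (w : H × ℂ) (γ : ℂ) (v : H × ℂ) :
    gMap w γ v = v + (γ * formA v w) • w := by
  simp [gMap, Afun_apply, smul_smul]

lemma formA_gMap (w : H × ℂ) (γ : ℂ)
    (h : γ + (starRingEnd ℂ) γ + γ * (starRingEnd ℂ) γ * formA w w = 0)
    (u v : H × ℂ) : formA (gMap w γ u) (gMap w γ v) = formA u v := by
  simp only [gMap_apply, formA_add_left, formA_add_right, formA_smul_left, formA_smul_right_s17,
    map_mul]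
  rw [show formA w v = (starRingEnd ℂ) (formA v w) from (formA_conj v w).symm]
  linear_combination (formA u w * (starRingEnd ℂ) (formA v w)) * h

lemma gMap_gMap (w : H × ℂ) (γ γ' : ℂ) (v : H × ℂ) :
    gMap w γ (gMap w γ' v) = gMap w (γ + γ' + γ * γ' * formA w w) v := by
  simp only [gMap_apply, formA_add_left, formA_smul_left]
  module

lemma memG_gMap (w : H × ℂ) (γ : ℂ)
    (h : γ + (starRingEnd ℂ) γ + γ * (starRingEnd ℂ) γ * formA w w = 0) :
    memG (gMap w γ) := by
  refine ⟨?_, formA_gMap w γ h⟩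
  have hinv : ∀ v, gMap w γ (gMap w ((starRingEnd ℂ) γ) v) = v := by
    intro v
    rw [gMap_gMap,
      show γ + (starRingEnd ℂ) γ + γ * (starRingEnd ℂ) γ * formA w w = 0 from h]
    simp [gMap_apply]
  have hinv' : ∀ v, gMap w ((starRingEnd ℂ) γ) (gMap w γ v) = v := by
    intro v
    rw [gMap_gMap,
      show (starRingEnd ℂ) γ + γ + (starRingEnd ℂ) γ * γ * formA w w = 0 by linear_combination h]
    simp [gMap_apply]
  exact Function.bijective_iff_has_inverse.2 ⟨gMap w ((starRingEnd ℂ) γ), hinv', hinv⟩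

lemma memG_id : memG (ContinuousLinearMap.id ℂ (H × ℂ)) :=
  ⟨Function.bijective_id, fun _ _ => rfl⟩

lemma memG_comp {S T : (H × ℂ) →L[ℂ] (H × ℂ)} (hS : memG S) (hT : memG T) :
    memG (S.comp T) := by
  refine ⟨hS.1.comp hT.1, fun u v => ?_⟩
  simp only [ContinuousLinearMap.comp_apply, hS.2, hT.2]

lemma exists_move (p q : H × ℂ) (hp : formA p p = 0) (hq : formA q q = 0)
    (h : p = q ∨ formA p q ≠ 0) :
    ∃ T : (H × ℂ) →L[ℂ] (H × ℂ), memG T ∧ T p = q ∧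
      ∀ v, formA v p = formA v q → T v = v := by
  rcases h with rfl | hc
  · exact ⟨ContinuousLinearMap.id ℂ (H × ℂ), memG_id, rfl, fun v _ => rfl⟩
  · set c := formA p q with hcdef
    have hcc : (starRingEnd ℂ) c = formA q p := formA_conj p q
    have hww : formA (p - q) (p - q) = -(c + (starRingEnd ℂ) c) := by
      rw [formA_sub_left, formA_sub_right, formA_sub_right, hp, hq, hcc]; ring
    have hc' : (starRingEnd ℂ) c ≠ 0 := by simpa using hc
    have hcond : c⁻¹ + (starRingEnd ℂ) c⁻¹ + c⁻¹ * (starRingEnd ℂ) c⁻¹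
        * formA (p - q) (p - q) = 0 := by
      rw [hww, map_inv₀]
      field_simp
      ring
    refine ⟨gMap (p - q) c⁻¹, memG_gMap _ _ hcond, ?_, ?_⟩
    · rw [gMap_apply, formA_sub_right, hp, ← hcdef,
        show c⁻¹ * (0 - c) = -1 by field_simp; ring]
      module
    · intro v hv
      rw [gMap_apply, formA_sub_right, hv]
      simp

lemma isotropic_norm_eq (r : H × ℂ) (hr : formA r r = 0) : ‖r.1‖ = ‖r.2‖ := by
  rw [formA, inner_self_eq_norm_sq_to_K, Complex.mul_conj, sub_eq_zero] at hr
  have h2' : ((‖r.1‖ ^ 2 : ℝ) : ℂ) = ((Complex.normSq r.2 : ℝ) : ℂ) := by push_cast; exact hr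
  have h2 : ‖r.1‖ ^ 2 = Complex.normSq r.2 := Complex.ofReal_inj.mp h2'
  have h3 : ‖r.1‖ ^ 2 = ‖r.2‖ ^ 2 := by
    rw [h2, ← Complex.sq_norm]
  rw [← Real.sqrt_sq (norm_nonneg r.1), ← Real.sqrt_sq (norm_nonneg r.2), h3]

lemma isotropic_orth_eq (p q v₁ : H × ℂ) (hp : formA p p = 0) (hq : formA q q = 0)
    (hpq : formA p q = 0) (h1 : formA v₁ p = 1) (h1' : formA v₁ q = 1) : p = q := by
  have hpn := isotropic_norm_eq p hp
  have hqn := isotropic_norm_eq q hq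
  have hp1 : p.1 ≠ 0 := by
    intro h0
    have hp2 : p.2 = 0 := by
      have : ‖p.2‖ = 0 := by rw [← hpn, h0, norm_zero]
      simpa using this
    have h00 : formA v₁ p = 0 := by rw [formA, h0, hp2]; simp
    rw [h1] at h00; exact one_ne_zero h00
  have hq1 : q.1 ≠ 0 := by
    intro h0
    have hq2 : q.2 = 0 := by
      have : ‖q.2‖ = 0 := by rw [← hqn, h0, norm_zero]
      simpa using this
    have h00 : formA v₁ q = 0 := by rw [formA, h0, hq2]; simp
    rw [h1'] at h00; exact one_ne_zero h00
  have hq2 : q.2 ≠ 0 := by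
    intro h0; apply hq1
    have : ‖q.1‖ = 0 := by rw [hqn, h0, norm_zero]
    simpa using this
  have hip : (inner ℂ q.1 p.1 : ℂ) = p.2 * (starRingEnd ℂ) q.2 := by
    have h' := hpq; rw [formA, sub_eq_zero] at h'; exact h'
  have hnorm : ‖(inner ℂ q.1 p.1 : ℂ)‖ = ‖q.1‖ * ‖p.1‖ := by
    rw [hip, norm_mul, RCLike.norm_conj, hqn, hpn]; ring
  obtain ⟨r, hr0, hr⟩ := (norm_inner_eq_norm_iff hq1 hp1).1 hnorm
  have hinner : (inner ℂ q.1 p.1 : ℂ) = r * (‖q.1‖ : ℂ) ^ 2 := by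
    rw [hr, inner_smul_right, inner_self_eq_norm_sq_to_K]
    norm_cast
  have hq22 : ((‖q.1‖ : ℂ)) ^ 2 = q.2 * (starRingEnd ℂ) q.2 := by
    rw [hqn, Complex.mul_conj]
    norm_cast
    rw [← Complex.sq_norm]
  have hcq : (starRingEnd ℂ) q.2 ≠ 0 := by simpa using hq2
  have hp2r : p.2 = r * q.2 := by
    have h' : (r * q.2) * (starRingEnd ℂ) q.2 = p.2 * (starRingEnd ℂ) q.2 := by
      rw [← hip, hinner, hq22]; ring
    exact (mul_right_cancel₀ hcq h').symm
  have hpq' : p = r • q := by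
    rw [Prod.ext_iff]
    exact ⟨hr, by simpa using hp2r⟩
  have hfin : formA v₁ p = (starRingEnd ℂ) r * formA v₁ q := by
    rw [hpq', formA_smul_right_s17]
  rw [h1, h1'] at hfin
  have hr1 : r = 1 := by
    have hcr : (starRingEnd ℂ) r = 1 := by simpa using hfin.symm
    have := congrArg (starRingEnd ℂ) hcr
    simpa using this
  rw [hpq', hr1, one_smul]

lemma formA_isotropic_boundary (x : H) (hx : ‖x‖ = 1) :
    formA ((x, 1) : H × ℂ) ((x, 1) : H × ℂ) = 0 := by
  simp [formA, inner_self_eq_norm_sq_to_K, hx]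

lemma formA_boundary_eq_zero_iff (x y : H) (hx : ‖x‖ = 1) (hy : ‖y‖ = 1) :
    formA ((x, 1) : H × ℂ) ((y, 1) : H × ℂ) = 0 ↔ x = y := by
  have : formA ((x, 1) : H × ℂ) ((y, 1) : H × ℂ) = (inner ℂ y x : ℂ) - 1 := by
    simp [formA]
  rw [this, sub_eq_zero, inner_eq_one_iff_of_norm_eq_one hy hx]
  exact ⟨fun h => h.symm, fun h => h.symm⟩


/-- `G` acts bi-transitively on the boundary of the unit ball: any
pair of distinct boundary points can be sent (projectively) to any other pair. -/
theorem bitransitive_on_boundary (x₁ x₂ y₁ y₂ : H)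
    (hx₁ : ‖x₁‖ = 1) (hx₂ : ‖x₂‖ = 1) (hy₁ : ‖y₁‖ = 1) (hy₂ : ‖y₂‖ = 1)
    (hx : x₁ ≠ x₂) (hy : y₁ ≠ y₂) :
    ∃ (T : (H × ℂ) →L[ℂ] (H × ℂ)) (μ₁ μ₂ : ℂ), memG T ∧ μ₁ ≠ 0 ∧ μ₂ ≠ 0 ∧
      T (x₁, 1) = μ₁ • ((y₁, 1) : H × ℂ) ∧
      T (x₂, 1) = μ₂ • ((y₂, 1) : H × ℂ) := by
  have ha : formA ((x₁, 1) : H × ℂ) ((x₂, 1) : H × ℂ) ≠ 0 := fun h =>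
    hx ((formA_boundary_eq_zero_iff x₁ x₂ hx₁ hx₂).1 h)
  have hb : formA ((y₁, 1) : H × ℂ) ((y₂, 1) : H × ℂ) ≠ 0 := fun h =>
    hy ((formA_boundary_eq_zero_iff y₁ y₂ hy₁ hy₂).1 h)
  set a := formA ((x₁, 1) : H × ℂ) ((x₂, 1) : H × ℂ) with hadef
  set b := formA ((y₁, 1) : H × ℂ) ((y₂, 1) : H × ℂ) with hbdef
  -- Step 1: move (x₁,1) to (y₁,1)
  have h1 : ((x₁, 1) : H × ℂ) = ((y₁, 1) : H × ℂ) ∨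
      formA ((x₁, 1) : H × ℂ) ((y₁, 1) : H × ℂ) ≠ 0 := by
    by_cases hxy : x₁ = y₁
    · left; rw [hxy]
    · right; exact fun h => hxy ((formA_boundary_eq_zero_iff x₁ y₁ hx₁ hy₁).1 h)
  obtain ⟨T₁, hT₁G, hT₁p, _⟩ := exists_move ((x₁, 1) : H × ℂ) ((y₁, 1) : H × ℂ)
    (formA_isotropic_boundary x₁ hx₁) (formA_isotropic_boundary y₁ hy₁) h1
  set p₂ := T₁ ((x₂, 1) : H × ℂ) with hp₂def
  have hp₂iso : formA p₂ p₂ = 0 := by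
    rw [hp₂def, hT₁G.2]; exact formA_isotropic_boundary x₂ hx₂
  have hv₁p₂ : formA ((y₁, 1) : H × ℂ) p₂ = a := by
    rw [← hT₁p, hp₂def, hT₁G.2]
  -- normalizations
  have hca : (starRingEnd ℂ) a ≠ 0 := by simpa using ha
  have hcb : (starRingEnd ℂ) b ≠ 0 := by simpa using hb
  set p : H × ℂ := ((starRingEnd ℂ) a)⁻¹ • p₂ with hpdef
  set q : H × ℂ := ((starRingEnd ℂ) b)⁻¹ • ((y₂, 1) : H × ℂ) with hqdef
  have hpiso : formA p p = 0 := by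
    rw [hpdef, formA_smul_left, formA_smul_right_s17, hp₂iso]; ring
  have hqiso : formA q q = 0 := by
    rw [hqdef, formA_smul_left, formA_smul_right_s17, formA_isotropic_boundary y₂ hy₂]; ring
  have h1p : formA ((y₁, 1) : H × ℂ) p = 1 := by
    rw [hpdef, formA_smul_right_s17, hv₁p₂, map_inv₀, Complex.conj_conj]
    exact inv_mul_cancel₀ ha
  have h1q : formA ((y₁, 1) : H × ℂ) q = 1 := by
    rw [hqdef, formA_smul_right_s17, ← hbdef, map_inv₀, Complex.conj_conj]
    exact inv_mul_cancel₀ hb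
  have h2 : p = q ∨ formA p q ≠ 0 := by
    by_cases hpq : p = q
    · exact Or.inl hpq
    · exact Or.inr fun h0 =>
        hpq (isotropic_orth_eq p q ((y₁, 1) : H × ℂ) hpiso hqiso h0 h1p h1q)
  obtain ⟨T₂, hT₂G, hT₂p, hT₂fix⟩ := exists_move p q hpiso hqiso h2
  have hT₂v₁ : T₂ ((y₁, 1) : H × ℂ) = ((y₁, 1) : H × ℂ) :=
    hT₂fix _ (h1p.trans h1q.symm)
  refine ⟨T₂.comp T₁, 1, (starRingEnd ℂ) a * ((starRingEnd ℂ) b)⁻¹,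
    memG_comp hT₂G hT₁G, one_ne_zero, mul_ne_zero hca (inv_ne_zero hcb), ?_, ?_⟩
  · rw [ContinuousLinearMap.comp_apply, hT₁p, hT₂v₁, one_smul]
  · rw [ContinuousLinearMap.comp_apply, ← hp₂def]
    have hp₂p : p₂ = (starRingEnd ℂ) a • p := by
      rw [hpdef, smul_smul, mul_inv_cancel₀ hca, one_smul]
    rw [hp₂p, map_smul, hT₂p, hqdef, smul_smul]


end
end

section
/- Let U be a unitary operator of the orthogonal complement (ℂ·e)^⊥ in H, a' ∈ H orthogonal to e, λ, μ, s ∈ ℂ with λ·conj(μ) = 1, Re s = (1/2)‖a'‖² and s ≠ 0, and let T̂ be the operator on H ⊕ ℂ given by T̂(x,z) = ((λ·⟨x,e⟩ + ⟨x', U⁻¹(a')⟩ + μ·s·z)·e + U(x') + μ·z·a', μ·z), which belongs to Ĝ. Then the spectrum of T̂ equals {λ, μ} ∪ σ(U), where σ(U) is the spectrum of U as a bounded operator on (ℂ·e)^⊥. -/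
noncomputable section

variable {H : Type*} [NormedAddCommGroup H] [InnerProductSpace ℂ H] [CompleteSpace H]

/-- The Hermitian form `Â((x,z),(y,w)) = -z·conj⟨y,e⟩ - ⟨x,e⟩·conj w + ⟨x',y'⟩`
(paper convention: linear in the first argument, with `⟨a,b⟩ = inner b a` in Mathlib,
and `x' = x - ⟨x,e⟩e`). -/
def hatA (e : H) (u v : H × ℂ) : ℂ :=
  - u.2 * (inner ℂ v.1 e : ℂ) - (inner ℂ e u.1 : ℂ) * (starRingEnd ℂ) v.2
    + (inner ℂ (v.1 - (inner ℂ e v.1 : ℂ) • e) (u.1 - (inner ℂ e u.1 : ℂ) • e) : ℂ)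

/-- Membership in the group `Ĝ` of bounded bijective linear maps preserving `Â`. -/
def memGhat (e : H) (T : (H × ℂ) →L[ℂ] (H × ℂ)) : Prop :=
  Function.Bijective T ∧ ∀ u v : H × ℂ, hatA e (T u) (T v) = hatA e u v

/-- `T` is the Heisenberg translation `(λ, a', s)`: an element of `Ĝ` sending
`(x,z)` to `λ·((⟨x,e⟩ + ⟨x',a'⟩ + s·z)·e + x' + z·a', z)`, where `|λ| = 1`,
`a' ⊥ e`, `s ≠ 0` and `Re s = ‖a'‖²/2`. -/
def IsHeisenberg (e : H) (T : (H × ℂ) →L[ℂ] (H × ℂ)) (lam : ℂ) (a' : H) (s : ℂ) :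
    Prop :=
  ‖lam‖ = 1 ∧ a' ∈ (ℂ ∙ e)ᗮ ∧ s ≠ 0 ∧ s.re = (1 / 2) * ‖a'‖ ^ 2 ∧
  memGhat e T ∧
  ∀ (x : H) (z : ℂ),
    T (x, z) = lam •
      (((((inner ℂ e x : ℂ) + (inner ℂ a' (x - (inner ℂ e x : ℂ) • e) : ℂ) + s * z) • e
          + (x - (inner ℂ e x : ℂ) • e) + z • a', z)) : H × ℂ)

/-- `K†`, the `Â`-orthogonal complement of a subspace `K` of `H ⊕ ℂ`. -/
def daggerHat (e : H) (K : Submodule ℂ (H × ℂ)) : Submodule ℂ (H × ℂ) where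
  carrier := {v | ∀ m ∈ K, hatA e v m = 0}
  add_mem' := by
    intro a b ha hb m hm
    have h1 := ha m hm
    have h2 := hb m hm
    simp only [hatA, Prod.fst_add, Prod.snd_add, inner_add_right, inner_sub_right,
      inner_smul_right, add_smul] at *
    ring_nf at *
    linear_combination h1 + h2
  zero_mem' := by
    intro m hm
    simp [hatA]
  smul_mem' := by
    intro c a ha m hm
    have h1 := ha m hm
    simp only [hatA, Prod.smul_fst, Prod.smul_snd, inner_smul_right, inner_sub_right,
      smul_eq_mul, smul_smul] at *
    ring_nf at *
    linear_combination c * h1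

end

section
variable {H : Type*} [NormedAddCommGroup H] [InnerProductSpace ℂ H] [CompleteSpace H]

/-- The component `x' = x - ⟨x,e⟩e` of `x`, as an element of `(ℂ·e)ᗮ`. -/
noncomputable def projPerp (e : H) (he : ‖e‖ = 1) (x : H) : ((ℂ ∙ e)ᗮ : Submodule ℂ H) :=
  ⟨x - (inner ℂ e x : ℂ) • e, by
    rw [Submodule.mem_orthogonal]
    intro u hu
    rcases Submodule.mem_span_singleton.1 hu with ⟨c, rfl⟩
    have h1 : (inner ℂ e e : ℂ) = 1 := by
      rw [inner_self_eq_norm_sq_to_K, he]; norm_num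
    simp [inner_smul_left, inner_sub_right, inner_smul_right, h1, he]
    ring⟩

set_option maxHeartbeats 2000000 in
/-- the spectrum of an element of the stabilizer of `∞` in `Ĝ` of the
standard form (with `λ·conj μ = 1`, `Re s = ‖a'‖²/2`, `s ≠ 0`) is `{λ, μ} ∪ σ(U)`. -/
theorem stabilizer_infinity_spectrum
    (e : H) (he : ‖e‖ = 1)
    (U : ((ℂ ∙ e)ᗮ : Submodule ℂ H) →L[ℂ] ((ℂ ∙ e)ᗮ : Submodule ℂ H))
    (hUbij : Function.Bijective U)
    (hUinner : ∀ u v : ((ℂ ∙ e)ᗮ : Submodule ℂ H), (inner ℂ (U u) (U v) : ℂ) = inner ℂ u v)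
    (a' c' : ((ℂ ∙ e)ᗮ : Submodule ℂ H)) (hc' : U c' = a')
    (lam μ s : ℂ) (hlamμ : lam * (starRingEnd ℂ) μ = 1)
    (hs : s.re = (1 / 2) * ‖(a' : H)‖ ^ 2) (hs0 : s ≠ 0)
    (T : (H × ℂ) →L[ℂ] (H × ℂ))
    (hTform : ∀ (x : H) (z : ℂ),
      T (x, z) =
        (((lam * (inner ℂ e x : ℂ)
            + (inner ℂ (c' : H) (x - (inner ℂ e x : ℂ) • e) : ℂ)
            + μ * s * z) • e
          + ((U (projPerp e he x) : H))
          + (μ * z) • (a' : H), μ * z) : H × ℂ)) :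
    memGhat e T ∧ spectrum ℂ T = {lam, μ} ∪ spectrum ℂ U := by
  have hee : (inner ℂ e e : ℂ) = 1 := by rw [inner_self_eq_norm_sq_to_K, he]; norm_num
  have hPc : ∀ p : ((ℂ ∙ e)ᗮ : Submodule ℂ H), (inner ℂ e (p : H) : ℂ) = 0 :=
    fun p => p.2 e (Submodule.mem_span_singleton_self e)
  have coord1 : ∀ (α : ℂ) (p : ((ℂ ∙ e)ᗮ : Submodule ℂ H)),
      (inner ℂ e (α • e + (p : H)) : ℂ) = α := by
    intro α p
    rw [inner_add_right, inner_smul_right, hee, hPc]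
    ring
  have coordP : ∀ (α : ℂ) (p : ((ℂ ∙ e)ᗮ : Submodule ℂ H)),
      projPerp e he (α • e + (p : H)) = p := by
    intro α p
    apply Subtype.ext
    show (α • e + (p : H)) - (inner ℂ e (α • e + (p:H)) : ℂ) • e = (p : H)
    rw [coord1]
    abel
  have hdec : ∀ x : H, (inner ℂ e x : ℂ) • e + ((projPerp e he x : H)) = x := by
    intro x
    show _ + (x - _) = x
    abel
  have hTc : ∀ (α : ℂ) (p : ((ℂ ∙ e)ᗮ : Submodule ℂ H)) (z : ℂ),
      T (α • e + (p : H), z)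
        = ((lam * α + (inner ℂ (c' : H) (p : H) : ℂ) + μ * s * z) • e
            + ((U p + (μ * z) • a' : ((ℂ ∙ e)ᗮ : Submodule ℂ H)) : H), μ * z) := by
    intro α p z
    rw [hTform]
    rw [coord1 α p, coordP α p]
    have h3 : α • e + (p : H) - α • e = (p : H) := by abel
    rw [h3]
    rw [Submodule.coe_add, Submodule.coe_smul, ← add_assoc]
  have hDtc : ∀ (t α : ℂ) (p : ((ℂ ∙ e)ᗮ : Submodule ℂ H)) (z : ℂ),
      (algebraMap ℂ ((H × ℂ) →L[ℂ] (H × ℂ)) t - T) (α • e + (p : H), z)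
        = (((t - lam) * α - (inner ℂ (c' : H) (p : H) : ℂ) - μ * s * z) • e
            + ((t • p - U p - (μ * z) • a' : ((ℂ ∙ e)ᗮ : Submodule ℂ H)) : H),
            (t - μ) * z) := by
    intro t α p z
    simp only [ContinuousLinearMap.sub_apply, Algebra.algebraMap_eq_smul_one,
      ContinuousLinearMap.smul_apply, ContinuousLinearMap.one_apply]
    rw [hTc]
    rw [Prod.smul_mk, Prod.mk_sub_mk, Prod.mk.injEq]
    constructor
    · simp only [Submodule.coe_add, Submodule.coe_sub, Submodule.coe_smul, smul_add]
      module
    · simp only [smul_eq_mul]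
      ring
  -- extraction of coordinates from an equation γ•e + ↑q = x
  have hcoords : ∀ (γ : ℂ) (q : ((ℂ ∙ e)ᗮ : Submodule ℂ H)) (x : H),
      γ • e + (q : H) = x → γ = (inner ℂ e x : ℂ) ∧ q = projPerp e he x := by
    intro γ q x h
    constructor
    · rw [← h, coord1]
    · rw [← h, coordP]
  have hproj0 : projPerp e he 0 = 0 := by
    apply Subtype.ext
    show (0 : H) - (inner ℂ e (0:H) : ℂ) • e = 0
    simp
  have hprojP : ∀ q : ((ℂ ∙ e)ᗮ : Submodule ℂ H), projPerp e he (q : H) = q := by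
    intro q
    have := coordP 0 q
    rwa [zero_smul, zero_add] at this
  have hlam0 : lam ≠ 0 := left_ne_zero_of_mul_eq_one hlamμ
  have hμ0 : μ ≠ 0 := by
    intro h
    rw [h] at hlamμ
    simp at hlamμ
  have key : ∀ t : ℂ,
      Function.Bijective (algebraMap ℂ ((H × ℂ) →L[ℂ] (H × ℂ)) t - T) ↔
        (t ≠ lam ∧ t ≠ μ ∧
          Function.Bijective (algebraMap ℂ
            ((((ℂ ∙ e)ᗮ : Submodule ℂ H)) →L[ℂ] (((ℂ ∙ e)ᗮ : Submodule ℂ H))) t - U)) := by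
    intro t
    have hUapp : ∀ y : ((ℂ ∙ e)ᗮ : Submodule ℂ H),
        (algebraMap ℂ _ t - U) y = t • y - U y := by
      intro y
      simp [Algebra.algebraMap_eq_smul_one]
    constructor
    · intro hB
      have h1 : t ≠ lam := by
        rintro rfl
        have he0 : (1 : ℂ) • e + (((0 : ((ℂ ∙ e)ᗮ : Submodule ℂ H))) : H) = e := by simp
        have h2 := hDtc t 1 0 0
        rw [he0] at h2
        have h3 : (algebraMap ℂ ((H × ℂ) →L[ℂ] (H × ℂ)) t - T) (e, 0) = 0 := by
          rw [h2]; simp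
        have h4 : (algebraMap ℂ ((H × ℂ) →L[ℂ] (H × ℂ)) t - T) (0, 0) = 0 := by
          have : ((0 : H), (0 : ℂ)) = (0 : H × ℂ) := rfl
          rw [this, map_zero]
        have h5 := hB.injective (h3.trans h4.symm)
        have h6 : e = 0 := congrArg Prod.fst h5
        rw [h6] at he
        simp at he
      have h2 : t ≠ μ := by
        rintro rfl
        obtain ⟨⟨x, z⟩, hu⟩ := hB.surjective ((0 : H), 1)
        have h3 := hDtc t (inner ℂ e x) (projPerp e he x) z
        rw [hdec x] at h3
        rw [h3] at hu
        have := congrArg Prod.snd hu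
        simp at this
      refine ⟨h1, h2, ?_, ?_⟩
      · -- U injective
        have hker : ∀ y : ((ℂ ∙ e)ᗮ : Submodule ℂ H),
            (algebraMap ℂ _ t - U) y = 0 → y = 0 := by
          intro y hy
          rw [hUapp] at hy
          have hα : (t - lam) ≠ 0 := sub_ne_zero.2 h1
          have h4 := hDtc t ((inner ℂ (c' : H) (y : H) : ℂ) / (t - lam)) y 0
          have h5 : (t - lam) * ((inner ℂ (c' : H) (y : H) : ℂ) / (t - lam))
              - (inner ℂ (c' : H) (y : H) : ℂ) - μ * s * 0 = 0 := by
            field_simp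
            ring
          rw [h5] at h4
          simp only [mul_zero, zero_smul, smul_zero, sub_zero, zero_add] at h4
          rw [hy] at h4
          simp only [Submodule.coe_zero, add_zero] at h4
          have h6 : (algebraMap ℂ ((H × ℂ) →L[ℂ] (H × ℂ)) t - T)
              (((inner ℂ (c' : H) (y : H) : ℂ) / (t - lam)) • e + (y : H), 0) = 0 := by
            rw [h4]; rfl
          have h7 : (algebraMap ℂ ((H × ℂ) →L[ℂ] (H × ℂ)) t - T) (0, 0) = 0 := by
            have : ((0 : H), (0 : ℂ)) = (0 : H × ℂ) := rfl
            rw [this, map_zero]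
          have h8 := hB.injective (h6.trans h7.symm)
          have h9 : ((inner ℂ (c' : H) (y : H) : ℂ) / (t - lam)) • e + (y : H) = 0 :=
            congrArg Prod.fst h8
          have h10 := (hcoords _ _ _ h9).2
          rw [hproj0] at h10
          exact h10
        intro y₁ y₂ hy
        have := hker (y₁ - y₂) (by rw [map_sub, hy, sub_self])
        exact sub_eq_zero.1 this
      · -- U surjective
        intro b'
        obtain ⟨⟨x, z⟩, hu⟩ := hB.surjective ((b' : H), 0)
        have h3 := hDtc t (inner ℂ e x) (projPerp e he x) z
        rw [hdec x] at h3
        rw [h3] at hu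
        have hz : z = 0 := by
          have h4 := congrArg Prod.snd hu
          simp only at h4
          rcases mul_eq_zero.1 h4 with h | h
          · exact absurd (sub_eq_zero.1 h) h2
          · exact h
        rw [hz] at hu
        have h5 := congrArg Prod.fst hu
        simp only [mul_zero, zero_smul, smul_zero, sub_zero] at h5
        have h6 := (hcoords _ _ _ h5).2
        rw [hprojP b'] at h6
        exact ⟨projPerp e he x, by rw [hUapp, h6]⟩
    · rintro ⟨h1, h2, hU⟩
      have htlam : (t - lam) ≠ 0 := sub_ne_zero.2 h1
      have htμ : (t - μ) ≠ 0 := sub_ne_zero.2 h2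
      constructor
      · -- injective
        have hker : ∀ u : H × ℂ,
            (algebraMap ℂ ((H × ℂ) →L[ℂ] (H × ℂ)) t - T) u = 0 → u = 0 := by
          rintro ⟨x, z⟩ hu
          have h3 := hDtc t (inner ℂ e x) (projPerp e he x) z
          rw [hdec x] at h3
          rw [h3, show (0 : H × ℂ) = ((0:H), (0:ℂ)) from rfl, Prod.mk.injEq] at hu
          have hz : z = 0 := by
            rcases mul_eq_zero.1 hu.2 with h | h
            · exact absurd (sub_eq_zero.1 h) h2
            · exact h
          subst hz
          have h5 := hu.1
          simp only [mul_zero, zero_smul, smul_zero, sub_zero] at h5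
          obtain ⟨h6, h7⟩ := hcoords _ _ _ h5
          rw [hproj0] at h7
          have h8 : projPerp e he x = 0 := by
            have h9 : (algebraMap ℂ _ t - U) (projPerp e he x)
                = (algebraMap ℂ _ t - U) 0 := by
              rw [hUapp, h7, map_zero]
            exact hU.injective h9
          have h10 : (inner ℂ e x : ℂ) = 0 := by
            rw [h8] at h6
            simp only [inner_zero_right, Submodule.coe_zero, sub_zero] at h6
            rcases mul_eq_zero.1 h6 with h | h
            · exact absurd (sub_eq_zero.1 h) h1
            · exact h
          have hx : x = 0 := by
            have := hdec x
            rw [h10, h8] at this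
            simpa using this.symm
          rw [hx]
          rfl
        intro u₁ u₂ huu
        have := hker (u₁ - u₂) (by rw [map_sub, huu, sub_self])
        exact sub_eq_zero.1 this
      · -- surjective
        rintro ⟨b, w⟩
        obtain ⟨y, hy⟩ := hU.surjective (projPerp e he b + (μ * ((t - μ)⁻¹ * w)) • a')
        rw [hUapp] at hy
        refine ⟨((((t - lam)⁻¹) * ((inner ℂ e b : ℂ) + (inner ℂ (c' : H) (y : H) : ℂ)
            + μ * s * ((t - μ)⁻¹ * w))) • e + (y : H), (t - μ)⁻¹ * w), ?_⟩
        rw [hDtc]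
        have hc1 : (t - lam) * ((t - lam)⁻¹ * ((inner ℂ e b : ℂ) + (inner ℂ (c' : H) (y : H) : ℂ)
            + μ * s * ((t - μ)⁻¹ * w))) - (inner ℂ (c' : H) (y : H) : ℂ)
            - μ * s * ((t - μ)⁻¹ * w) = (inner ℂ e b : ℂ) := by
          field_simp
          ring
        rw [hc1]
        have hc2 : t • y - U y - (μ * ((t - μ)⁻¹ * w)) • a' = projPerp e he b := by
          rw [hy]; abel
        rw [hc2]
        have hc3 : (t - μ) * ((t - μ)⁻¹ * w) = w := by field_simp
        rw [hc3, hdec b]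
  -- T bijective
  have hTbij : Function.Bijective T := by
    have hnU : Function.Bijective (algebraMap ℂ
        ((((ℂ ∙ e)ᗮ : Submodule ℂ H)) →L[ℂ] (((ℂ ∙ e)ᗮ : Submodule ℂ H))) (0:ℂ) - U) := by
      have h : ⇑(algebraMap ℂ
          ((((ℂ ∙ e)ᗮ : Submodule ℂ H)) →L[ℂ] (((ℂ ∙ e)ᗮ : Submodule ℂ H))) (0:ℂ) - U)
          = (fun y => -y) ∘ ⇑U := by
        funext y
        simp [Algebra.algebraMap_eq_smul_one]
      rw [h]
      exact neg_involutive.bijective.comp hUbij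
    have h0 := (key 0).2 ⟨Ne.symm hlam0, Ne.symm hμ0, hnU⟩
    have h : ⇑T = (fun u : H × ℂ => -u) ∘
        ⇑(algebraMap ℂ ((H × ℂ) →L[ℂ] (H × ℂ)) (0:ℂ) - T) := by
      funext u
      simp [Algebra.algebraMap_eq_smul_one]
    rw [h]
    exact neg_involutive.bijective.comp h0
  -- spectrum
  have hspec : spectrum ℂ T = {lam, μ} ∪ spectrum ℂ U := by
    ext t
    simp only [spectrum.mem_iff, Set.mem_union, Set.mem_insert_iff, Set.mem_singleton_iff]
    rw [ContinuousLinearMap.isUnit_iff_bijective, key,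
      ← ContinuousLinearMap.isUnit_iff_bijective]
    tauto
  -- hatA decomposition
  have hAdec : ∀ (γ δ z w : ℂ) (p q : ((ℂ ∙ e)ᗮ : Submodule ℂ H)),
      hatA e (γ • e + (p:H), z) (δ • e + (q:H), w)
        = -z * (starRingEnd ℂ) δ - γ * (starRingEnd ℂ) w + (inner ℂ (q:H) (p:H) : ℂ) := by
    intro γ δ z w p q
    have h1 : ∀ (γ : ℂ) (p : ((ℂ ∙ e)ᗮ : Submodule ℂ H)), γ • e + (p:H) - γ • e = (p:H) := by
      intro γ p
      abel
    have h2 : (inner ℂ (δ • e + (q:H)) e : ℂ) = (starRingEnd ℂ) δ := by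
      rw [← inner_conj_symm, coord1]
    show -z * (inner ℂ (δ • e + (q:H)) e : ℂ)
        - (inner ℂ e (γ • e + (p:H)) : ℂ) * (starRingEnd ℂ) w + _ = _
    rw [h2, coord1, coord1, h1, h1]
  -- preservation in coordinates
  have main : ∀ (α β z w : ℂ) (p q : ((ℂ ∙ e)ᗮ : Submodule ℂ H)),
      hatA e (T (α • e + (p:H), z)) (T (β • e + (q:H), w))
        = hatA e (α • e + (p:H), z) (β • e + (q:H), w) := by
    intro α β z w p q
    have hlamμ2 : (starRingEnd ℂ) lam * μ = 1 := by
      have := congrArg (starRingEnd ℂ) hlamμ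
      simpa using this
    have hss : s + (starRingEnd ℂ) s = ((‖(a' : H)‖ ^ 2 : ℝ) : ℂ) := by
      rw [Complex.add_conj, hs]
      push_cast
      ring
    have hN : (inner ℂ (a' : H) (a' : H) : ℂ) = ((‖(a' : H)‖ ^ 2 : ℝ) : ℂ) := by
      rw [inner_self_eq_norm_sq_to_K]
      norm_cast
    have hUU : (inner ℂ ((U q : ((ℂ ∙ e)ᗮ : Submodule ℂ H)) : H)
        ((U p : ((ℂ ∙ e)ᗮ : Submodule ℂ H)) : H) : ℂ) = (inner ℂ (q:H) (p:H) : ℂ) :=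
      hUinner q p
    have hUa : (inner ℂ (a' : H) ((U p : ((ℂ ∙ e)ᗮ : Submodule ℂ H)) : H) : ℂ)
        = (inner ℂ (c' : H) (p : H) : ℂ) := by
      rw [← hc']
      exact hUinner c' p
    have haU : (inner ℂ ((U q : ((ℂ ∙ e)ᗮ : Submodule ℂ H)) : H) (a' : H) : ℂ)
        = (starRingEnd ℂ) (inner ℂ (c' : H) (q : H) : ℂ) := by
      rw [← hc', ← inner_conj_symm]
      congr 1
      exact hUinner c' q
    rw [hTc, hTc, hAdec, hAdec]
    simp only [Submodule.coe_add, Submodule.coe_smul, inner_add_left, inner_add_right,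
      inner_smul_left, inner_smul_right, map_add, map_mul]
    rw [hUU, hUa, haU, hN]
    linear_combination (-(z * (starRingEnd ℂ) β)) * hlamμ2
      + (-(α * (starRingEnd ℂ) w)) * hlamμ
      + (-(μ * (starRingEnd ℂ) μ * z * (starRingEnd ℂ) w)) * hss
  refine ⟨⟨hTbij, ?_⟩, hspec⟩
  rintro ⟨x, z⟩ ⟨y, w⟩
  have h := main (inner ℂ e x) (inner ℂ e y) z w (projPerp e he x) (projPerp e he y)
  rw [hdec x, hdec y] at h
  exact h
end
end
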